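/- Let n ≥ 1, let g be a polynomial with complex coefficients with g(0) = 1 and deg(g) < n−1, and let A, X be n×n complex matrices such that XA − AX = X · g(X) and X is nilpotent. Let λ ∈ ℂ, let u ∈ ℂⁿ and let p be an integer with 1 ≤ p ≤ n such that (A − λ·I_n)^p u = 0. If s ≥ 1 is an integer such that λ − s does not belong to the spectrum of A, then X^s u = 0 and X u lies in the sum of subspaces Σ_{i=1}^{s−1} ker((A + (i − λ)·I_n)^p) of ℂⁿ. -/

import Mathlib

open Polynomial in
theorem aux_sigma (g : Polynomial ℂ) (hg0 : g.coeff 0 = 1) (m : ℕ) :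
    ∃ σ : Polynomial ℂ, σ.coeff 0 = 1 ∧
      ∀ k ≤ m, (g * (X * σ.derivative) - (g - 1) * σ).coeff k = 0 := by
  induction m with
  | zero =>
    refine ⟨1, by simp, ?_⟩
    intro k hk
    interval_cases k
    simp [hg0]
  | succ m ih =>
    obtain ⟨σ, hσ0, hσ⟩ := ih
    set E : Polynomial ℂ := g * (X * σ.derivative) - (g - 1) * σ with hE
    have hm1 : ((m : ℂ) + 1) ≠ 0 := Nat.cast_add_one_ne_zero m
    obtain ⟨c, hc⟩ : ∃ c : ℂ, c * ((m : ℂ) + 1) = -(E.coeff (m + 1)) :=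
      ⟨-(E.coeff (m + 1)) / ((m : ℂ) + 1), by field_simp⟩
    refine ⟨σ + C c * X ^ (m + 1), by simp [hσ0], ?_⟩
    have hder : (σ + C c * X ^ (m + 1)).derivative
        = σ.derivative + C (c * ((m : ℂ) + 1)) * X ^ m := by
      rw [derivative_add, derivative_C_mul, derivative_X_pow]
      push_cast
      rw [map_mul]
      ring
    have hexp : g * (X * (σ + C c * X ^ (m + 1)).derivative)
        - (g - 1) * (σ + C c * X ^ (m + 1))
        = E + (C (c * ((m : ℂ) + 1)) * g - (g - 1) * C c) * X ^ (m + 1) := by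
      rw [hder, hE, pow_succ]
      ring
    rw [hexp]
    intro k hk
    rcases lt_or_eq_of_le hk with hk' | hk'
    · have hk2 : k ≤ m := Nat.lt_succ_iff.mp hk'
      rw [coeff_add, hσ k hk2, coeff_mul_X_pow']
      simp only [zero_add, ite_eq_right_iff]
      intro hle
      omega
    · subst hk'
      rw [coeff_add, coeff_mul_X_pow']
      simp only [le_refl, if_true, Nat.sub_self]
      have h2 : (C (c * ((m : ℂ) + 1)) * g - (g - 1) * C c).coeff 0
          = c * ((m : ℂ) + 1) := by
        simp [coeff_sub, coeff_C_mul, mul_comm, hg0]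
      rw [h2, hc]
      simp

open Polynomial in
theorem aux_comm {n : ℕ} (A M : Matrix (Fin n) (Fin n) ℂ) (g : Polynomial ℂ)
    (h : M * A = A * M + M * Polynomial.aeval M g) (q : Polynomial ℂ) :
    Polynomial.aeval M q * A
      = A * Polynomial.aeval M q
        + Polynomial.aeval M g * Polynomial.aeval M (X * q.derivative) := by
  have hcomm : ∀ r : Polynomial ℂ, M * aeval M r = aeval M r * M := fun r => by
    simpa only [map_mul, aeval_X] using congrArg (aeval M) (mul_comm X r)
  have hpow : ∀ m : ℕ, M ^ m * A = A * M ^ m + (m : ℂ) • (aeval M g * M ^ m) := by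
    intro m
    induction m with
    | zero => simp
    | succ m ih =>
      have h1 : M ^ (m + 1) * A = M * (M ^ m * A) := by rw [← mul_assoc, pow_succ']
      rw [h1, ih, mul_add, ← mul_assoc M A, h, mul_smul_comm,
        ← mul_assoc M (aeval M g) (M ^ m), hcomm g,
        mul_assoc (aeval M g) M (M ^ m), add_mul]
      push_cast
      rw [add_smul, one_smul, pow_succ']
      simp only [mul_assoc]
      abel
  induction q using Polynomial.induction_on with
  | C a => simp [Algebra.commutes]
  | add r t hr ht =>
    rw [derivative_add, mul_add, map_add, map_add, mul_add, add_mul, hr, ht, mul_add]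
    abel
  | monomial m a _ =>
    rw [derivative_C_mul, derivative_X_pow]
    push_cast
    have e2 : (X : Polynomial ℂ) * (C a * (C ((m : ℂ) + 1) * X ^ m))
        = C (a * ((m : ℂ) + 1)) * X ^ (m + 1) := by
      rw [map_mul, pow_succ]
      ring
    rw [e2]
    have e1 : aeval M (C a * X ^ (m + 1)) = a • (M ^ (m + 1)) := by
      simp [Algebra.smul_def]
    have e3 : aeval M (C (a * ((m : ℂ) + 1)) * X ^ (m + 1))
        = (a * ((m : ℂ) + 1)) • (M ^ (m + 1)) := by
      simp [Algebra.smul_def]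
    rw [e1, e3, smul_mul_assoc, hpow (m + 1)]
    push_cast
    simp only [smul_add, smul_smul, mul_smul_comm]

theorem stmt14 (n : ℕ) (hn : 1 ≤ n) (g : Polynomial ℂ)
    (hg0 : Polynomial.eval 0 g = 1) (hgdeg : g.natDegree < n - 1)
    (A X : Matrix (Fin n) (Fin n) ℂ)
    (h : X * A - A * X = X * Polynomial.aeval X g) (hX : IsNilpotent X)
    (lam : ℂ) (u : Fin n → ℂ) (p : ℕ) (hp1 : 1 ≤ p) (hpn : p ≤ n)
    (hu : ((A - lam • (1 : Matrix (Fin n) (Fin n) ℂ)) ^ p).mulVec u = 0)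
    (s : ℕ) (hs : 1 ≤ s) (hspec : lam - (s : ℂ) ∉ spectrum ℂ A) :
    (X ^ s).mulVec u = 0 ∧
      X.mulVec u ∈
        ⨆ i ∈ Finset.Icc 1 (s - 1),
          LinearMap.ker
            (((A + ((i : ℂ) - lam) • (1 : Matrix (Fin n) (Fin n) ℂ)) ^ p).mulVecLin) := by
  classical
  obtain ⟨e, he⟩ := hX
  set G := Polynomial.aeval X g with hG
  have hXA : X * A = A * X + X * G := by
    have h2 := sub_eq_iff_eq_add.mp h
    rw [h2, add_comm]
  have hcommX : ∀ r : Polynomial ℂ, X * Polynomial.aeval X r = Polynomial.aeval X r * X :=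
    fun r => by
      simpa only [map_mul, Polynomial.aeval_X] using
        congrArg (Polynomial.aeval X) (mul_comm Polynomial.X r)
  have hg0' : g.coeff 0 = 1 := by rwa [Polynomial.coeff_zero_eq_eval_zero]
  obtain ⟨σ, hσ0, hσ⟩ := aux_sigma g hg0' e
  set S := Polynomial.aeval X σ with hS
  -- matrix identity G * aeval (X σ') = (G-1) * S
  have hdvd : (Polynomial.X : Polynomial ℂ) ^ e ∣
      (g * (Polynomial.X * σ.derivative) - (g - 1) * σ) :=
    Polynomial.X_pow_dvd_iff.mpr fun d hd => hσ d hd.le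
  obtain ⟨R, hRR⟩ := hdvd
  have hmat : G * Polynomial.aeval X (Polynomial.X * σ.derivative) = (G - 1) * S := by
    have h3 := congrArg (Polynomial.aeval X) hRR
    simp only [map_mul, map_sub, map_pow, map_one, Polynomial.aeval_X, he,
      zero_mul] at h3
    rw [map_mul, Polynomial.aeval_X]
    exact sub_eq_zero.mp h3
  have key : S * A = (A + (G - 1)) * S := by
    rw [hS, aux_comm A X g hXA σ, ← hG, ← hS, hmat]
    noncomm_ring
  -- S is a unit, with two-sided inverse T commuting with X
  have hSsub : S - 1 = X * Polynomial.aeval X σ.divX := by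
    conv_lhs => rw [hS, ← Polynomial.X_mul_divX_add σ, hσ0]
    simp [map_mul, Polynomial.aeval_X]
  have hSnil : IsNilpotent (S - 1) := by
    rw [hSsub]
    exact Commute.isNilpotent_mul_right (hcommX σ.divX) ⟨e, he⟩
  have hSunit : IsUnit S := by
    have h4 := hSnil.isUnit_one_add
    have h4' : (1 : Matrix (Fin n) (Fin n) ℂ) + (S - 1) = S := by abel
    rwa [h4'] at h4
  obtain ⟨Su, hSu⟩ := hSunit
  set T : Matrix (Fin n) (Fin n) ℂ := ↑Su⁻¹ with hT
  have hST : S * T = 1 := by rw [hT, ← hSu]; exact Su.mul_inv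
  have hTS : T * S = 1 := by rw [hT, ← hSu]; exact Su.inv_mul
  have hXS : X * S = S * X := hcommX σ
  have hXT : X * T = T * X := by
    calc X * T = T * S * X * T := by rw [hTS, one_mul]
    _ = T * (X * S) * T := by rw [hXS]; noncomm_ring
    _ = T * X * (S * T) := by noncomm_ring
    _ = T * X := by rw [hST, mul_one]
  have hXTpow : ∀ a : ℕ, X ^ a * T = T * X ^ a := by
    intro a
    induction a with
    | zero => simp
    | succ a ih => rw [pow_succ, mul_assoc, hXT, ← mul_assoc, ih, mul_assoc]
  have hSTpow : ∀ a : ℕ, S ^ a * T ^ a = 1 := by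
    intro a
    induction a with
    | zero => simp
    | succ a ih =>
      rw [pow_succ, pow_succ']
      calc S ^ a * S * (T * T ^ a) = S ^ a * (S * T) * T ^ a := by noncomm_ring
      _ = 1 := by rw [hST, mul_one, ih]
  have hXpowT : ∀ a : ℕ, X * T ^ a = T ^ a * X := by
    intro a
    induction a with
    | zero => simp
    | succ a ih => rw [pow_succ, ← mul_assoc, ih, mul_assoc, hXT, ← mul_assoc]
  -- conjugation
  have conj : ∀ ν : ℂ, (A - ν • 1 + (G - 1)) * S = S * (A - ν • (1 : Matrix (Fin n) (Fin n) ℂ)) := by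
    intro ν
    have h5 : S * (ν • (1 : Matrix (Fin n) (Fin n) ℂ)) = (ν • 1) * S := by
      rw [mul_smul_comm, smul_mul_assoc, mul_one, one_mul]
    have h6 : (A - ν • 1 + (G - 1)) * S = (A + (G - 1)) * S - (ν • 1) * S := by
      noncomm_ring
    rw [h6, ← key, mul_sub, h5]
  have conjp : ∀ (ν : ℂ) (k : ℕ), (A - ν • 1 + (G - 1)) ^ k * S
      = S * (A - ν • (1 : Matrix (Fin n) (Fin n) ℂ)) ^ k := by
    intro ν k
    induction k with
    | zero => simp
    | succ k ih =>
      rw [pow_succ, pow_succ, mul_assoc, conj, ← mul_assoc, ih, mul_assoc]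
  have comm1 : ∀ ν : ℂ, X * (A - ν • 1)
      = (A - (ν - 1) • 1 + (G - 1)) * X := by
    intro ν
    have hXG : X * G = G * X := by rw [hG]; exact hcommX g
    have h5 : X * (ν • (1 : Matrix (Fin n) (Fin n) ℂ)) = (ν • 1) * X := by
      rw [mul_smul_comm, smul_mul_assoc, mul_one, one_mul]
    have h6 : X * (A - ν • 1) = X * A - (ν • 1) * X := by rw [mul_sub, h5]
    rw [h6, hXA, hXG]
    have h7 : ((ν - 1) • (1 : Matrix (Fin n) (Fin n) ℂ)) = ν • 1 - 1 := by
      rw [sub_smul, one_smul]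
    rw [h7]
    noncomm_ring
  have comm1p : ∀ (ν : ℂ) (k : ℕ), X * (A - ν • 1) ^ k
      = (A - (ν - 1) • 1 + (G - 1)) ^ k * X := by
    intro ν k
    induction k with
    | zero => simp
    | succ k ih =>
      rw [pow_succ, ← mul_assoc, ih, mul_assoc, comm1, ← mul_assoc, ← pow_succ]
  -- the lowering lemma
  have low : ∀ (ν : ℂ) (v : Fin n → ℂ),
      ((A - ν • 1) ^ p).mulVec v = 0 →
      ((A - (ν - 1) • 1) ^ p).mulVec (T.mulVec (X.mulVec v)) = 0 := by
    intro ν v hv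
    have h6 : (X * (A - ν • 1) ^ p).mulVec v = 0 := by
      rw [← Matrix.mulVec_mulVec, hv, Matrix.mulVec_zero]
    rw [comm1p ν p] at h6
    have h7 : (A - (ν - 1) • 1 + (G - 1)) ^ p = S * (A - (ν - 1) • 1) ^ p * T := by
      rw [← conjp (ν - 1) p, mul_assoc, hST, mul_one]
    rw [h7] at h6
    have h8 : (T * (S * (A - (ν - 1) • 1) ^ p * T * X)).mulVec v = 0 := by
      rw [← Matrix.mulVec_mulVec, h6, Matrix.mulVec_zero]
    have h9 : T * (S * (A - (ν - 1) • 1) ^ p * T * X)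
        = (A - (ν - 1) • 1) ^ p * (T * X) := by
      rw [← mul_assoc, ← mul_assoc, ← mul_assoc, hTS, one_mul, mul_assoc]
    rw [h9] at h8
    rw [Matrix.mulVec_mulVec, Matrix.mulVec_mulVec, mul_assoc]
    exact h8
  -- part 1
  have part1aux : ∀ k : ℕ,
      ((A - (lam - k) • 1) ^ p).mulVec ((T ^ k * X ^ k).mulVec u) = 0 := by
    intro k
    induction k with
    | zero => simpa using hu
    | succ k ih =>
      have h10 := low (lam - k) _ ih
      have h11 : T.mulVec (X.mulVec ((T ^ k * X ^ k).mulVec u))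
          = ((T ^ (k + 1) * X ^ (k + 1))).mulVec u := by
        rw [Matrix.mulVec_mulVec, Matrix.mulVec_mulVec]
        congr 1
        rw [← mul_assoc, mul_assoc T X (T ^ k), hXpowT k, pow_succ', pow_succ']
        noncomm_ring
      rw [h11] at h10
      have h12 : lam - (↑(k + 1) : ℂ) = lam - k - 1 := by push_cast; ring
      rw [h12]
      exact h10
  have hMs : IsUnit (A - (lam - s) • (1 : Matrix (Fin n) (Fin n) ℂ)) := by
    have h13 := spectrum.notMem_iff.mp hspec
    rw [Algebra.algebraMap_eq_smul_one] at h13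
    have h14 : A - (lam - s) • (1 : Matrix (Fin n) (Fin n) ℂ)
        = -((lam - s) • 1 - A) := (neg_sub _ _).symm
    rw [h14]
    exact h13.neg
  have part1 : (X ^ s).mulVec u = 0 := by
    have h15 := part1aux s
    obtain ⟨W, hW⟩ := (hMs.pow p).exists_left_inv
    have h16 : (T ^ s * X ^ s).mulVec u = 0 := by
      have := congrArg (W.mulVec) h15
      rwa [Matrix.mulVec_mulVec, hW, Matrix.one_mulVec, Matrix.mulVec_zero] at this
    calc (X ^ s).mulVec u = (S ^ s * T ^ s * X ^ s).mulVec u := by rw [hSTpow s, one_mul]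
    _ = (S ^ s).mulVec ((T ^ s * X ^ s).mulVec u) := by
        rw [Matrix.mulVec_mulVec, ← mul_assoc]
    _ = 0 := by rw [h16, Matrix.mulVec_zero]
  refine ⟨part1, ?_⟩
  -- part 2
  have memK : ∀ (j : ℕ) (v : Fin n → ℂ), 1 ≤ j → j ≤ s - 1 →
      ((A - (lam - j) • 1) ^ p).mulVec v = 0 →
      v ∈ ⨆ i ∈ Finset.Icc 1 (s - 1),
          LinearMap.ker
            (((A + ((i : ℂ) - lam) • (1 : Matrix (Fin n) (Fin n) ℂ)) ^ p).mulVecLin) := by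
    intro j v hj1 hj2 hv
    have h17 : A + ((j : ℂ) - lam) • (1 : Matrix (Fin n) (Fin n) ℂ)
        = A - (lam - j) • 1 := by
      rw [show ((j : ℂ) - lam) = -(lam - j) by ring, neg_smul, ← sub_eq_add_neg]
    refine Submodule.mem_iSup_of_mem j (Submodule.mem_iSup_of_mem
      (Finset.mem_Icc.mpr ⟨hj1, hj2⟩) ?_)
    rw [LinearMap.mem_ker, Matrix.mulVecLin_apply, h17]
    exact hv
  have E : ∀ m : ℕ, ∀ j : ℕ, 1 ≤ j → j + m ≤ s → ∀ v : Fin n → ℂ,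
      ((A - (lam - j) • 1) ^ p).mulVec v = 0 → (X ^ m).mulVec v = 0 →
      ∀ q : Polynomial ℂ, (Polynomial.aeval X q).mulVec v ∈
        ⨆ i ∈ Finset.Icc 1 (s - 1),
          LinearMap.ker
            (((A + ((i : ℂ) - lam) • (1 : Matrix (Fin n) (Fin n) ℂ)) ^ p).mulVecLin) := by
    intro m
    induction m with
    | zero =>
      intro j _ _ v _ hv0 q
      have : v = 0 := by simpa using hv0
      rw [this, Matrix.mulVec_zero]
      exact Submodule.zero_mem _
    | succ m ih =>
      intro j hj1 hjm v hv hv0 q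
      have hq : Polynomial.aeval X q
          = X * Polynomial.aeval X q.divX + (q.coeff 0) • 1 := by
        conv_lhs => rw [← Polynomial.X_mul_divX_add q]
        rw [map_add, map_mul, Polynomial.aeval_X, Polynomial.aeval_C,
          Algebra.algebraMap_eq_smul_one]
      rw [hq, Matrix.add_mulVec]
      apply Submodule.add_mem
      · -- (X * aeval q.divX) *ᵥ v = aeval (q.divX * σ) *ᵥ v'
        set v' : Fin n → ℂ := T.mulVec (X.mulVec v) with hv'
        have hKv' : ((A - (lam - (j + 1 : ℕ)) • 1) ^ p).mulVec v' = 0 := by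
          have h18 := low (lam - j) v hv
          have h19 : lam - (↑(j + 1) : ℂ) = lam - j - 1 := by push_cast; ring
          rw [h19]
          exact h18
        have hXv' : (X ^ m).mulVec v' = 0 := by
          rw [hv', Matrix.mulVec_mulVec, Matrix.mulVec_mulVec, hXTpow m, mul_assoc,
            ← pow_succ, ← Matrix.mulVec_mulVec, hv0, Matrix.mulVec_zero]
        have hrw : (X * Polynomial.aeval X q.divX).mulVec v
            = (Polynomial.aeval X (q.divX * σ)).mulVec v' := by
          rw [hv', Matrix.mulVec_mulVec, Matrix.mulVec_mulVec]
          congr 1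
          rw [map_mul, ← hS, mul_assoc (Polynomial.aeval X q.divX) S T, hST, mul_one,
            hcommX q.divX]
        rw [hrw]
        exact ih (j + 1) (by omega) (by omega) v' hKv' hXv' (q.divX * σ)
      · rw [Matrix.smul_mulVec, Matrix.one_mulVec]
        apply Submodule.smul_mem
        exact memK j v hj1 (by omega) hv
  -- apply E
  rcases Nat.lt_or_ge s 2 with hs2 | hs2
  · have hs1 : s = 1 := by omega
    subst hs1
    have : X.mulVec u = 0 := by simpa using part1
    rw [this]
    exact Submodule.zero_mem _
  · set v0 : Fin n → ℂ := T.mulVec (X.mulVec u) with hv0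
    have hKv0 : ((A - (lam - (1 : ℕ)) • 1) ^ p).mulVec v0 = 0 := by
      have h20 := low lam u (by simpa using hu)
      have h21 : lam - ((1 : ℕ) : ℂ) = lam - 1 := by push_cast; ring
      rw [h21]
      exact h20
    have hXv0 : (X ^ (s - 1)).mulVec v0 = 0 := by
      rw [hv0, Matrix.mulVec_mulVec, Matrix.mulVec_mulVec]
      rw [hXTpow (s - 1), mul_assoc, ← pow_succ]
      have : s - 1 + 1 = s := by omega
      rw [this, ← Matrix.mulVec_mulVec, part1, Matrix.mulVec_zero]
    have happ := E (s - 1) 1 le_rfl (by omega) v0 hKv0 hXv0 σ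
    have hfin : (Polynomial.aeval X σ).mulVec v0 = X.mulVec u := by
      rw [hv0, ← hS, Matrix.mulVec_mulVec, Matrix.mulVec_mulVec, hST, one_mul]
    rwa [hfin] at happ
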